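/- For p ∈ (1,∞) and ρ > 0, the set X = {z ∈ ℝ^n_{++} : ‖z‖_p ≤ ρ} equipped with the Thompson metric d(z, z̃) = ‖ln(z) − ln(z̃)‖_∞ is a complete metric space; that is, every Cauchy sequence in X with respect to d converges with respect to d to a limit that belongs to X. -/

import Mathlib

noncomputable section

open Real Filter Topology

/-- Parameter space of a one-hidden-layer network: pairs `(w, u)`. -/
abbrev PV (K n1 d : ℕ) : Type :=
  (Fin K → Fin n1 → ℝ) × (Fin n1 → Fin d → ℝ)

/-- Entrywise `p`-norm of a vector. -/
def pnorm {ι : Type} [Fintype ι] (p : ℝ) (x : ι → ℝ) : ℝ :=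
  (∑ i, |x i| ^ p) ^ (1 / p)

/-- Entrywise `p`-norm of a matrix. -/
def pnormM {ι κ : Type} [Fintype ι] [Fintype κ] (p : ℝ) (x : ι → κ → ℝ) : ℝ :=
  (∑ i, ∑ j, |x i j| ^ p) ^ (1 / p)

/-- Hölder conjugate `p' = p/(p-1)`. -/
def hconj (p : ℝ) : ℝ := p / (p - 1)

/-- `ψ_p(x) = sign(x) |x|^{p-1}`. -/
def psi (p x : ℝ) : ℝ := Real.sign x * |x| ^ (p - 1)

/-- The constraint set `S₊`. -/
def Splus (K n1 d : ℕ) (pw pu ρw ρu : ℝ) : Set (PV K n1 d) :=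
  {z | (∀ i j, 0 ≤ z.1 i j) ∧ (∀ a b, 0 ≤ z.2 a b) ∧
    (∀ i, pnorm pw (z.1 i) = ρw) ∧ pnormM pu z.2 = ρu}

/-- The constraint set `S₊₊` (strictly positive entries). -/
def Spp (K n1 d : ℕ) (pw pu ρw ρu : ℝ) : Set (PV K n1 d) :=
  {z | (∀ i j, 0 < z.1 i j) ∧ (∀ a b, 0 < z.2 a b) ∧
    (∀ i, pnorm pw (z.1 i) = ρw) ∧ pnormM pu z.2 = ρu}

/-- The set `B₊₊` (strictly positive entries, norms at most `ρ`). -/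
def Bpp (K n1 d : ℕ) (pw pu ρw ρu : ℝ) : Set (PV K n1 d) :=
  {z | (∀ i j, 0 < z.1 i j) ∧ (∀ a b, 0 < z.2 a b) ∧
    (∀ i, pnorm pw (z.1 i) ≤ ρw) ∧ pnormM pu z.2 ≤ ρu}

/-- Coordinate direction for the entry `w_{a,b}`. -/
def eW {K n1 d : ℕ} (a : Fin K) (b : Fin n1) : PV K n1 d :=
  ((fun i j => if i = a ∧ j = b then 1 else 0), 0)

/-- Coordinate direction for the entry `u_{a,b}`. -/
def eU {K n1 d : ℕ} (a : Fin n1) (b : Fin d) : PV K n1 d :=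
  (0, fun i j => if i = a ∧ j = b then 1 else 0)

/-- Partial derivative `∂Φ/∂w_{a,b}`. -/
def gradW {K n1 d : ℕ} (Φ : PV K n1 d → ℝ) (z : PV K n1 d) (a : Fin K) (b : Fin n1) : ℝ :=
  fderiv ℝ Φ z (eW a b)

/-- Partial derivative `∂Φ/∂u_{a,b}`. -/
def gradU {K n1 d : ℕ} (Φ : PV K n1 d → ℝ) (z : PV K n1 d) (a : Fin n1) (b : Fin d) : ℝ :=
  fderiv ℝ Φ z (eU a b)

/-- The power-iteration map `G^Φ`. -/
def GPhi {K n1 d : ℕ} (pw pu ρw ρu : ℝ) (Φ : PV K n1 d → ℝ) (z : PV K n1 d) : PV K n1 d :=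
  ((fun i j => ρw * psi (hconj pw) (gradW Φ z i j) /
      pnorm pw (fun j' => psi (hconj pw) (gradW Φ z i j'))),
    fun a b => ρu * psi (hconj pu) (gradU Φ z a b) /
      pnormM pu (fun a' b' => psi (hconj pu) (gradU Φ z a' b')))

/-- One-hidden-layer network `f_r(w,u)(x)`. -/
def net {K n1 d : ℕ} (α : Fin n1 → ℝ) (w : Fin K → Fin n1 → ℝ) (u : Fin n1 → Fin d → ℝ)
    (x : Fin d → ℝ) (r : Fin K) : ℝ :=
  ∑ l, w r l * (∑ m, u l m * x m) ^ α l

/-- Cross-entropy loss. -/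
def loss {K : ℕ} (y : Fin K) (g : Fin K → ℝ) : ℝ :=
  -g y + Real.log (∑ j, Real.exp (g j))

/-- The objective `Φ`. -/
def Phi {K n1 d n : ℕ} (α : Fin n1 → ℝ) (x : Fin n → Fin d → ℝ) (y : Fin n → Fin K)
    (ε : ℝ) (z : PV K n1 d) : ℝ :=
  (1 / (n : ℝ)) * ∑ i, (-loss (y i) (net α z.1 z.2 (x i)) + ∑ r, net α z.1 z.2 (x i) r)
    + ε * ((∑ r, ∑ l, z.1 r l) + ∑ l, ∑ m, z.2 l m)

/-- Spectral radius of a real square matrix: maximum modulus of its (complex) eigenvalues. -/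
def specRad {m : ℕ} (A : Matrix (Fin m) (Fin m) ℝ) : ℝ :=
  sSup {r : ℝ | ∃ μ : ℂ, μ ∈ spectrum ℂ (A.map Complex.ofReal) ∧ r = ‖μ‖}

/-- Maximum of `g` over `Fin n`, `n > 0`. -/
def finMax {n : ℕ} (hn : 0 < n) (g : Fin n → ℝ) : ℝ :=
  Finset.univ.sup' (Finset.univ_nonempty_iff.mpr (Fin.pos_iff_nonempty.mp hn)) g

/-- Weighted Thompson metric `μ` with weights `γ`. -/
def thomW {K n1 d : ℕ} (γ : Fin (K + 1) → ℝ) (z z' : PV K n1 d) : ℝ :=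
  (∑ i : Fin K, γ i.castSucc *
      ‖(fun j : Fin n1 => Real.log (z.1 i j) - Real.log (z'.1 i j))‖)
    + γ (Fin.last K) *
      ‖(fun (a : Fin n1) (b : Fin d) => Real.log (z.2 a b) - Real.log (z'.2 a b))‖

/-- The function `Ψ^α_{p,q}` from the paper. -/
def PsiF {r : ℕ} (α : Fin r → ℝ) (p q : ℝ) (δ : Fin r → ℝ) (t : ℝ) : ℝ :=
  let J : Finset (Fin r) := Finset.univ.filter fun l => α l * p ≤ q
  let Jc : Finset (Fin r) := Finset.univ.filter fun l => q < α l * p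
  let ab : ℝ := if h : J.Nonempty then J.inf' h α else 0
  ((∑ l ∈ J, (δ l * t ^ α l) ^ (p * q / (q - ab * p))) ^ (1 - ab * p / q)
    + if h : Jc.Nonempty then Jc.sup' h fun j => (δ j * t ^ α j) ^ p else 0) ^ (1 / p)

end

open Real Filter Topology

/-- The intersection of the positive orthant with a closed `p`-norm ball is a
complete metric space for the Thompson metric: every Cauchy sequence converges in the set. -/
theorem statement3 {n : ℕ} (p : ℝ) (hp : 1 < p) (ρ : ℝ) (hρ : 0 < ρ)
    (z : ℕ → Fin n → ℝ)
    (hz : ∀ k, (∀ i, 0 < z k i) ∧ pnorm p (z k) ≤ ρ)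
    (hcauchy : ∀ ε > (0 : ℝ), ∃ N, ∀ k ≥ N, ∀ l ≥ N,
      ‖(fun i : Fin n => Real.log (z k i) - Real.log (z l i))‖ < ε) :
    ∃ w : Fin n → ℝ, (∀ i, 0 < w i) ∧ pnorm p w ≤ ρ ∧
      ∀ ε > (0 : ℝ), ∃ N, ∀ k ≥ N,
        ‖(fun i : Fin n => Real.log (z k i) - Real.log (w i))‖ < ε := by
  set f : ℕ → Fin n → ℝ := fun k i => Real.log (z k i) with hf
  have hcs : CauchySeq f := by
    rw [Metric.cauchySeq_iff]
    intro ε hε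
    obtain ⟨N, hN⟩ := hcauchy ε hε
    refine ⟨N, fun k hk l hl => ?_⟩
    have := hN k hk l hl
    simpa [dist_eq_norm, hf, Pi.sub_def] using this
  obtain ⟨L, hL⟩ := cauchySeq_tendsto_of_complete hcs
  have hzi : ∀ i, Tendsto (fun k => z k i) atTop (𝓝 (Real.exp (L i))) := by
    intro i
    have h1 : Tendsto (fun k => f k i) atTop (𝓝 (L i)) := tendsto_pi_nhds.mp hL i
    have h2 := (Real.continuous_exp.tendsto _).comp h1
    convert h2 using 2 with k
    exact (Real.exp_log ((hz k).1 i)).symm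
  refine ⟨fun i => Real.exp (L i), fun i => Real.exp_pos _, ?_, ?_⟩
  · have hs : Tendsto (fun k => ∑ i, |z k i| ^ p) atTop
        (𝓝 (∑ i, |Real.exp (L i)| ^ p)) := by
      apply tendsto_finset_sum
      intro i _
      have habs : Tendsto (fun k => |z k i|) atTop (𝓝 |Real.exp (L i)|) :=
        (continuous_abs.tendsto _).comp (hzi i)
      exact ((Real.continuousAt_rpow_const _ p
        (Or.inr (by linarith))).tendsto).comp habs
    have htot : Tendsto (fun k => pnorm p (z k)) atTop (𝓝 (pnorm p (fun i => Real.exp (L i)))) := by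
      unfold pnorm
      exact ((Real.continuousAt_rpow_const _ (1/p)
        (Or.inr (by positivity))).tendsto).comp hs
    exact le_of_tendsto htot (Eventually.of_forall fun k => (hz k).2)
  · intro ε hε
    have hL' : Tendsto f atTop (𝓝 L) := hL
    rw [Metric.tendsto_atTop] at hL'
    obtain ⟨N, hN⟩ := hL' ε hε
    refine ⟨N, fun k hk => ?_⟩
    have := hN k hk
    rw [dist_eq_norm] at this
    have e : ∀ i, Real.log (z k i) - Real.log (Real.exp (L i)) = (f k - L) i := by
      intro i
      simp [hf, Real.log_exp]
    simp only [e]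
    exact this
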